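/- There is an absolute constant c > 0 with the following property: for every a ∈ D with 1/2 ≤ |a| < 1, the function f_a(z) := 1/(1−\bar{a}z) satisfies ∫_D |f_a'(z)|³·(1−|z|) dA(z) ≥ c·(1−|a|)^{-1}·‖f_a‖_3³, where A is area measure on D. Consequently, there is no constant C > 0 such that ∫_D |f'(z)|³(1−|z|) dA(z) ≤ C‖f‖_3³ holds for all f ∈ H³. -/

import Mathlib

open MeasureTheory Complex Set Metric ENNReal

noncomputable section

/-- Normalized Lebesgue (arclength) measure `m` on the unit circle `T`, as a measure on `ℂ`. -/
def circleMeasure : Measure ℂ :=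
  (ENNReal.ofReal (2 * Real.pi))⁻¹ •
    Measure.map (fun t : ℝ => Complex.exp (t * Complex.I)) (volume.restrict (Ioc 0 (2 * Real.pi)))

/-- The open unit disk `D`. -/
def unitDisk : Set ℂ := ball (0 : ℂ) 1

/-- `g` is, `m`-a.e. on the circle, the (radial) boundary-value function of `f`. -/
def IsBoundaryValue (f g : ℂ → ℂ) : Prop :=
  ∀ᵐ ζ ∂circleMeasure,
    Filter.Tendsto (fun r : ℝ => f (((r : ℂ)) * ζ)) (nhdsWithin 1 (Iio 1)) (nhds (g ζ))

/-- The Hardy norm `‖f‖_p`; for `p = ∞` it is the sup norm over the disk. -/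
def hNorm (p : ℝ≥0∞) (f : ℂ → ℂ) : ℝ≥0∞ :=
  if p = ⊤ then ⨆ z : unitDisk, (‖f (z : ℂ)‖₊ : ℝ≥0∞)
  else ⨆ r : Ioo (0 : ℝ) 1,
    (∫⁻ ζ, (‖f ((((r : ℝ) : ℂ)) * ζ)‖₊ : ℝ≥0∞) ^ p.toReal ∂circleMeasure) ^ (1 / p.toReal)

/-- Membership in the Hardy space `H^p` (with `f` identified with its boundary values,
i.e. the values of `f` on the circle are `m`-a.e. its radial limits from the disk). -/
def MemHp (p : ℝ≥0∞) (f : ℂ → ℂ) : Prop :=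
  DifferentiableOn ℂ f unitDisk ∧ hNorm p f < ⊤ ∧ IsBoundaryValue f f

/-- Inner functions: bounded holomorphic with unimodular boundary values. -/
def IsInner (θ : ℂ → ℂ) : Prop :=
  MemHp ⊤ θ ∧ ∀ᵐ ζ ∂circleMeasure, ‖θ ζ‖ = 1

/-- `θ` is nonconstant on the unit disk. -/
def Nonconstant (θ : ℂ → ℂ) : Prop := ¬ ∃ c : ℂ, ∀ z ∈ unitDisk, θ z = c

/-- Membership in the star-invariant subspace `K^p_θ`:  `f ∈ H^p` and the function
`ζ ↦ conj ζ * conj (f ζ) * θ ζ` on the circle coincides `m`-a.e. with (the boundary values of)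
an `H^p` function. -/
def MemKp (p : ℝ≥0∞) (θ f : ℂ → ℂ) : Prop :=
  MemHp p f ∧ ∃ h : ℂ → ℂ, MemHp p h ∧
    ∀ᵐ ζ ∂circleMeasure, h ζ = (starRingEnd ℂ) ζ * (starRingEnd ℂ) (f ζ) * θ ζ

/-- `u ∈ Re H^p`. -/
def MemReHp (p : ℝ≥0∞) (u : ℂ → ℝ) : Prop :=
  ∃ f : ℂ → ℂ, MemHp p f ∧ ∀ᵐ ζ ∂circleMeasure, u ζ = (f ζ).re

/-- `u ∈ Re K^p_θ`. -/
def MemReKp (p : ℝ≥0∞) (θ : ℂ → ℂ) (u : ℂ → ℝ) : Prop :=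
  ∃ f : ℂ → ℂ, MemKp p θ f ∧ ∀ᵐ ζ ∂circleMeasure, u ζ = (f ζ).re

lemma poisson_integral (v : ℂ) (hv : ‖v‖ < 1) :
    ∫ t in (0:ℝ)..(2*Real.pi), (Complex.normSq (1 - v * Complex.exp (t * Complex.I)))⁻¹
      = 2 * Real.pi * (1 - Complex.normSq v)⁻¹ := by
  set g : ℂ → ℂ := fun z => (1 - v * z)⁻¹ with hg
  have key : ∀ z : ℂ, ‖z‖ ≤ 1 → 1 - v * z ≠ 0 := by
    intro z hz h
    have : ‖v * z‖ < 1 := by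
      calc ‖v * z‖ = ‖v‖ * ‖z‖ := norm_mul _ _
      _ ≤ ‖v‖ * 1 := by nlinarith [norm_nonneg v, norm_nonneg z]
      _ < 1 := by linarith
    have hvz : v * z = 1 := by linear_combination -h
    rw [hvz] at this; simp at this
  have hdiff : ∀ z ∈ closedBall (0:ℂ) 1, DifferentiableAt ℂ g z := by
    intro z hz
    have : 1 - v * z ≠ 0 := key z (by simpa [mem_closedBall, dist_eq_norm] using hz)
    exact ((differentiableAt_const (1:ℂ)).sub
      ((differentiableAt_const v).mul differentiableAt_id)).inv this
  have hDCC : DiffContOnCl ℂ g (ball (0:ℂ) 1) := by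
    constructor
    · exact fun z hz => (hdiff z (ball_subset_closedBall hz)).differentiableWithinAt
    · rw [closure_ball (0:ℂ) one_ne_zero]
      exact fun z hz => (hdiff z hz).continuousAt.continuousWithinAt
  have hw : (starRingEnd ℂ) v ∈ ball (0:ℂ) 1 := by
    simpa [mem_ball, dist_eq_norm] using hv
  have cauchy := hDCC.circleIntegral_sub_inv_smul hw
  rw [circleIntegral] at cauchy
  have h1 : ∀ t : ℝ,
      deriv (circleMap 0 1) t • ((circleMap 0 1 t - (starRingEnd ℂ) v)⁻¹ • g (circleMap 0 1 t))
        = Complex.I * (((Complex.normSq (1 - v * Complex.exp (t * Complex.I)))⁻¹ : ℝ) : ℂ) := by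
    intro t
    have hcm : circleMap 0 1 t = Complex.exp (t * Complex.I) := by simp [circleMap]
    set e : ℂ := Complex.exp (t * Complex.I) with he
    have hene : e ≠ 0 := Complex.exp_ne_zero _
    have habs : ‖e‖ = 1 := Complex.norm_exp_ofReal_mul_I t
    have hnsq : Complex.normSq e = 1 := by
      rw [Complex.normSq_eq_norm_sq, habs]; norm_num
    set u : ℂ := 1 - v * e with hu
    have hu0 : u ≠ 0 := key e (by simp [habs])
    have hme : e * (starRingEnd ℂ) e = (Complex.normSq e : ℂ) := Complex.mul_conj e
    have hfact : e - (starRingEnd ℂ) v = e * (starRingEnd ℂ) u := by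
      calc e - (starRingEnd ℂ) v = e - (starRingEnd ℂ) v * (e * (starRingEnd ℂ) e) := by
            rw [hme, hnsq]; push_cast; ring
        _ = e * (starRingEnd ℂ) (1 - v * e) := by rw [map_sub, map_one, map_mul]; ring
        _ = e * (starRingEnd ℂ) u := by rw [← hu]
    have hge : g e = u⁻¹ := by rw [hg, hu]
    rw [deriv_circleMap, hcm, smul_eq_mul, smul_eq_mul, hfact, hge]
    calc e * I * ((e * (starRingEnd ℂ) u)⁻¹ * u⁻¹)
        = (e * e⁻¹) * (I * (u⁻¹ * ((starRingEnd ℂ) u)⁻¹)) := by rw [mul_inv]; ring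
      _ = I * (u * (starRingEnd ℂ) u)⁻¹ := by
          rw [mul_inv_cancel₀ hene, one_mul, mul_inv]
      _ = I * ((Complex.normSq u : ℝ) : ℂ)⁻¹ := by rw [Complex.mul_conj]
      _ = I * (((Complex.normSq u)⁻¹ : ℝ) : ℂ) := by rw [Complex.ofReal_inv]
  have heq : (∫ t in (0:ℝ)..(2*Real.pi),
      Complex.I * (((Complex.normSq (1 - v * Complex.exp (t * Complex.I)))⁻¹ : ℝ) : ℂ))
      = (2 * (Real.pi:ℂ) * I) • g ((starRingEnd ℂ) v) := by
    rw [← cauchy]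
    apply intervalIntegral.integral_congr
    intro t _
    exact (h1 t).symm
  rw [intervalIntegral.integral_const_mul, intervalIntegral.integral_ofReal] at heq
  have hgv : g ((starRingEnd ℂ) v) = (((1 - Complex.normSq v)⁻¹ : ℝ) : ℂ) := by
    rw [hg]
    simp only
    rw [Complex.mul_conj, Complex.ofReal_inv]
    norm_num
  rw [hgv, smul_eq_mul] at heq
  have : Complex.I * ((∫ t in (0:ℝ)..(2*Real.pi),
      (Complex.normSq (1 - v * Complex.exp (t * Complex.I)))⁻¹ : ℝ) : ℂ)
      = Complex.I * (((2 * Real.pi * (1 - Complex.normSq v)⁻¹ : ℝ)) : ℂ) := by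
    rw [heq]; push_cast; ring
  have := mul_left_cancel₀ Complex.I_ne_zero this
  exact_mod_cast this

lemma measurable_circleexp : Measurable (fun t : ℝ => Complex.exp (t * Complex.I)) :=
  ((Complex.continuous_ofReal.mul continuous_const).cexp).measurable

lemma circle_lintegral (G : ℂ → ℝ≥0∞) (hG : Measurable G) :
    ∫⁻ ζ, G ζ ∂circleMeasure = (ENNReal.ofReal (2*Real.pi))⁻¹ *
      ∫⁻ t in Ioc (0:ℝ) (2*Real.pi), G (Complex.exp (t * Complex.I)) := by
  rw [circleMeasure, lintegral_smul_measure, lintegral_map hG measurable_circleexp, smul_eq_mul]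

lemma circleMeasure_univ : circleMeasure univ = 1 := by
  rw [circleMeasure, Measure.smul_apply, Measure.map_apply measurable_circleexp MeasurableSet.univ]
  rw [preimage_univ, Measure.restrict_apply_univ, Real.volume_Ioc, sub_zero, smul_eq_mul,
    ENNReal.inv_mul_cancel]
  · simp [Real.pi_pos.le, ne_of_gt, ENNReal.ofReal_pos]
    positivity
  · exact ENNReal.ofReal_ne_top

lemma circle_ae_norm_one : ∀ᵐ ζ ∂circleMeasure, ‖ζ‖ = 1 := by
  rw [ae_iff]
  have hms : MeasurableSet {ζ : ℂ | ¬ ‖ζ‖ = 1} :=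
    ((isClosed_eq continuous_norm continuous_const).measurableSet).compl
  rw [circleMeasure, Measure.smul_apply, Measure.map_apply measurable_circleexp hms]
  have : (fun t : ℝ => Complex.exp (t * Complex.I)) ⁻¹' {ζ : ℂ | ¬ ‖ζ‖ = 1} = ∅ := by
    ext t
    simp [Complex.norm_exp_ofReal_mul_I t]
  rw [this]
  simp

lemma I_r_bound (v : ℂ) (hv : ‖v‖ < 1) (ε : ℝ) (hε : 0 < ε) (hεv : ε ≤ 1 - ‖v‖) :
    ∫⁻ ζ, (‖(1 - v * ζ)⁻¹‖₊ : ℝ≥0∞) ^ (3:ℝ) ∂circleMeasure ≤ ENNReal.ofReal (ε⁻¹ * ε⁻¹) := by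
  have hG : Measurable (fun ζ : ℂ => (‖(1 - v * ζ)⁻¹‖₊ : ℝ≥0∞) ^ (3:ℝ)) := by
    exact (((measurable_const.sub (measurable_const.mul measurable_id)).inv).enorm).pow_const _
  rw [circle_lintegral _ hG]
  have hcont0 : Continuous fun t : ℝ => Complex.normSq (1 - v * Complex.exp (t * Complex.I)) :=
    Complex.continuous_normSq.comp
      (continuous_const.sub (continuous_const.mul
        ((Complex.continuous_ofReal.mul continuous_const).cexp)))
  have hnormlb : ∀ t : ℝ, ε ≤ ‖1 - v * Complex.exp (t * Complex.I)‖ := by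
    intro t
    have h1 : ‖v * Complex.exp (t * Complex.I)‖ = ‖v‖ := by
      rw [norm_mul, Complex.norm_exp_ofReal_mul_I, mul_one]
    have := norm_sub_norm_le (1:ℂ) (v * Complex.exp (t * Complex.I))
    rw [h1, norm_one] at this
    linarith
  have hne : ∀ t : ℝ, Complex.normSq (1 - v * Complex.exp (t * Complex.I)) ≠ 0 := by
    intro t h
    rw [Complex.normSq_eq_zero] at h
    have := hnormlb t
    rw [h, norm_zero] at this
    linarith
  have hcont : Continuous fun t : ℝ =>
      ε⁻¹ * (Complex.normSq (1 - v * Complex.exp (t * Complex.I)))⁻¹ :=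
    continuous_const.mul (hcont0.inv₀ hne)
  have step1 : ∫⁻ t in Ioc (0:ℝ) (2*Real.pi),
      (‖(1 - v * Complex.exp (t * Complex.I))⁻¹‖₊ : ℝ≥0∞) ^ (3:ℝ)
      ≤ ∫⁻ t in Ioc (0:ℝ) (2*Real.pi),
        ENNReal.ofReal (ε⁻¹ * (Complex.normSq (1 - v * Complex.exp (t * Complex.I)))⁻¹) := by
    apply lintegral_mono
    intro t
    show (‖(1 - v * Complex.exp (t * Complex.I))⁻¹‖₊ : ℝ≥0∞) ^ (3:ℝ)
      ≤ ENNReal.ofReal (ε⁻¹ * (Complex.normSq (1 - v * Complex.exp (t * Complex.I)))⁻¹)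
    set u : ℂ := 1 - v * Complex.exp (t * Complex.I) with hu
    have h3 : (‖u⁻¹‖₊ : ℝ≥0∞) ^ (3:ℝ) = ENNReal.ofReal (‖u⁻¹‖ ^ (3:ℝ)) := by
      rw [← ENNReal.ofReal_coe_nnreal, coe_nnnorm, ← ENNReal.ofReal_rpow_of_nonneg (norm_nonneg _) (by norm_num)]
    rw [h3]
    apply ENNReal.ofReal_le_ofReal
    have hul : ε ≤ ‖u‖ := hnormlb t
    have hns : Complex.normSq u = ‖u‖ ^ 2 := by
      rw [Complex.normSq_eq_norm_sq]
    rw [hns, norm_inv]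
    have h4 : (‖u‖⁻¹) ^ (3:ℝ) = ‖u‖⁻¹ * (‖u‖ ^ 2)⁻¹ := by
      rw [show (3:ℝ) = ((3:ℕ):ℝ) by norm_num, Real.rpow_natCast, ← inv_pow]
      ring
    rw [h4]
    gcongr
    all_goals first | exact inv_anti₀ hε hul | skip
  have hint : IntegrableOn (fun t : ℝ =>
      ε⁻¹ * (Complex.normSq (1 - v * Complex.exp (t * Complex.I)))⁻¹)
      (Ioc (0:ℝ) (2*Real.pi)) volume :=
    (hcont.continuousOn.integrableOn_Icc).mono_set Ioc_subset_Icc_self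
  have step2 : ∫⁻ t in Ioc (0:ℝ) (2*Real.pi),
        ENNReal.ofReal (ε⁻¹ * (Complex.normSq (1 - v * Complex.exp (t * Complex.I)))⁻¹)
      = ENNReal.ofReal (ε⁻¹ * (2 * Real.pi * (1 - Complex.normSq v)⁻¹)) := by
    rw [← ofReal_integral_eq_lintegral_ofReal hint]
    · congr 1
      rw [← intervalIntegral.integral_of_le (by positivity : (0:ℝ) ≤ 2*Real.pi),
        intervalIntegral.integral_const_mul, poisson_integral v hv]
    · filter_upwards with t
      have := (hne t).lt_of_le' (Complex.normSq_nonneg _) |>.le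
      positivity
  calc (ENNReal.ofReal (2*Real.pi))⁻¹ * ∫⁻ t in Ioc (0:ℝ) (2*Real.pi),
      (‖(1 - v * Complex.exp (t * Complex.I))⁻¹‖₊ : ℝ≥0∞) ^ (3:ℝ)
      ≤ (ENNReal.ofReal (2*Real.pi))⁻¹ *
        ENNReal.ofReal (ε⁻¹ * (2 * Real.pi * (1 - Complex.normSq v)⁻¹)) := by
        rw [← step2]; exact mul_le_mul_right step1 _
    _ = ENNReal.ofReal (ε⁻¹ * (1 - Complex.normSq v)⁻¹) := by
        have hsplit : ENNReal.ofReal (ε⁻¹ * (2 * Real.pi * (1 - Complex.normSq v)⁻¹))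
            = ENNReal.ofReal (2*Real.pi) * ENNReal.ofReal (ε⁻¹ * (1 - Complex.normSq v)⁻¹) := by
          rw [← ENNReal.ofReal_mul (by positivity)]
          congr 1; ring
        rw [hsplit, ← mul_assoc,
          ENNReal.inv_mul_cancel (ENNReal.ofReal_pos.mpr (by positivity)).ne'
            ENNReal.ofReal_ne_top, one_mul]
    _ ≤ ENNReal.ofReal (ε⁻¹ * ε⁻¹) := by
        apply ENNReal.ofReal_le_ofReal
        have hv1 : ‖v‖ ≤ 1 := hv.le
        have h5 : Complex.normSq v ≤ ‖v‖ := by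
          rw [Complex.normSq_eq_norm_sq]
          nlinarith [norm_nonneg v]
        have h6 : ε ≤ 1 - Complex.normSq v := by linarith
        gcongr
        all_goals first | exact inv_anti₀ hε h6 | skip

lemma hNorm_ofReal3 (f : ℂ → ℂ) : hNorm (ENNReal.ofReal 3) f =
    ⨆ r : Ioo (0:ℝ) 1,
      (∫⁻ ζ, (‖f (((r:ℝ):ℂ) * ζ)‖₊ : ℝ≥0∞) ^ (3:ℝ) ∂circleMeasure) ^ (1/(3:ℝ)) := by
  rw [hNorm, if_neg ENNReal.ofReal_ne_top, ENNReal.toReal_ofReal (by norm_num)]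

lemma norm_conj_mul_real (a : ℂ) (r : ℝ) : ‖(starRingEnd ℂ) a * (r:ℂ)‖ = ‖a‖ * |r| := by
  rw [norm_mul, RCLike.norm_conj, Complex.norm_real, Real.norm_eq_abs]

lemma hNorm_le (a : ℂ) (ha : ‖a‖ < 1) :
    hNorm (ENNReal.ofReal 3) (fun z => (1 - (starRingEnd ℂ) a * z)⁻¹)
      ≤ (ENNReal.ofReal ((1-‖a‖)⁻¹ * (1-‖a‖)⁻¹)) ^ (1/(3:ℝ)) := by
  rw [hNorm_ofReal3]
  apply iSup_le
  rintro ⟨r, hr0, hr1⟩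
  apply ENNReal.rpow_le_rpow _ (by norm_num)
  have hint : (∫⁻ ζ, (‖(fun z => (1 - (starRingEnd ℂ) a * z)⁻¹) (((r:ℝ):ℂ) * ζ)‖₊ : ℝ≥0∞) ^ (3:ℝ)
      ∂circleMeasure)
      = ∫⁻ ζ, (‖(1 - ((starRingEnd ℂ) a * (r:ℂ)) * ζ)⁻¹‖₊ : ℝ≥0∞) ^ (3:ℝ) ∂circleMeasure := by
    apply lintegral_congr
    intro ζ
    congr 3
    ring
  rw [hint]
  have hvn : ‖(starRingEnd ℂ) a * (r:ℂ)‖ = ‖a‖ * r := by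
    rw [norm_conj_mul_real, abs_of_pos hr0]
  have hva : ‖(starRingEnd ℂ) a * (r:ℂ)‖ ≤ ‖a‖ := by
    rw [hvn]; nlinarith [norm_nonneg a]
  exact I_r_bound _ (lt_of_le_of_lt hva ha) (1-‖a‖) (by linarith) (by linarith)

lemma hNorm_cube_le (a : ℂ) (ha : ‖a‖ < 1) :
    hNorm (ENNReal.ofReal 3) (fun z => (1 - (starRingEnd ℂ) a * z)⁻¹) ^ (3:ℕ)
      ≤ ENNReal.ofReal ((1-‖a‖)⁻¹ * (1-‖a‖)⁻¹) := by
  calc hNorm (ENNReal.ofReal 3) (fun z => (1 - (starRingEnd ℂ) a * z)⁻¹) ^ (3:ℕ)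
      ≤ ((ENNReal.ofReal ((1-‖a‖)⁻¹ * (1-‖a‖)⁻¹)) ^ (1/(3:ℝ))) ^ (3:ℕ) :=
        pow_le_pow_left' (hNorm_le a ha) 3
    _ = ENNReal.ofReal ((1-‖a‖)⁻¹ * (1-‖a‖)⁻¹) := by
        rw [← ENNReal.rpow_natCast (_ ^ (1/(3:ℝ))) 3, ← ENNReal.rpow_mul]
        norm_num

lemma hNorm_lb (a : ℂ) (ha : ‖a‖ < 1) :
    ENNReal.ofReal (8⁻¹) ^ (1/(3:ℝ))
      ≤ hNorm (ENNReal.ofReal 3) (fun z => (1 - (starRingEnd ℂ) a * z)⁻¹) := by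
  rw [hNorm_ofReal3]
  apply le_iSup_of_le ⟨(1/2 : ℝ), by norm_num⟩
  apply ENNReal.rpow_le_rpow _ (by norm_num)
  have : ENNReal.ofReal (8⁻¹) = ∫⁻ _, ENNReal.ofReal (8⁻¹) ∂circleMeasure := by
    rw [lintegral_const, circleMeasure_univ, mul_one]
  rw [this]
  apply lintegral_mono_ae
  filter_upwards [circle_ae_norm_one] with ζ hζ
  set x : ℂ := 1 - (starRingEnd ℂ) a * ((((1:ℝ)/2 : ℝ):ℂ) * ζ) with hx
  have h1 : ‖(starRingEnd ℂ) a * ((((1:ℝ)/2:ℝ):ℂ) * ζ)‖ ≤ 1/2 := by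
    rw [norm_mul, norm_mul, RCLike.norm_conj, hζ, Complex.norm_real, Real.norm_eq_abs,
      show |(1:ℝ)/2| = 1/2 by norm_num]
    nlinarith [norm_nonneg a]
  have hxb : ‖x‖ ≤ 2 := by
    calc ‖x‖ ≤ ‖(1:ℂ)‖ + ‖(starRingEnd ℂ) a * ((((1:ℝ)/2:ℝ):ℂ) * ζ)‖ := norm_sub_le _ _
      _ ≤ 2 := by rw [norm_one]; linarith
  have hxlb : (1:ℝ)/2 ≤ ‖x‖ := by
    have := norm_sub_norm_le (1:ℂ) ((starRingEnd ℂ) a * ((((1:ℝ)/2:ℝ):ℂ) * ζ))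
    rw [norm_one] at this
    calc (1:ℝ)/2 = 1 - 1/2 := by norm_num
      _ ≤ ‖x‖ := by rw [hx]; linarith
  show ENNReal.ofReal (8⁻¹) ≤ (‖x⁻¹‖₊ : ℝ≥0∞) ^ (3:ℝ)
  have h3 : (‖x⁻¹‖₊ : ℝ≥0∞) ^ (3:ℝ) = ENNReal.ofReal (‖x⁻¹‖ ^ (3:ℝ)) := by
    rw [← ENNReal.ofReal_coe_nnreal, coe_nnnorm, ← ENNReal.ofReal_rpow_of_nonneg (norm_nonneg _) (by norm_num)]
  rw [h3]
  apply ENNReal.ofReal_le_ofReal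
  rw [norm_inv, show (3:ℝ) = ((3:ℕ):ℝ) by norm_num, Real.rpow_natCast]
  have h2 : (2:ℝ)⁻¹ ≤ ‖x‖⁻¹ := inv_anti₀ (by linarith) hxb
  calc (8:ℝ)⁻¹ = ((2:ℝ)⁻¹)^3 := by norm_num
    _ ≤ (‖x‖⁻¹)^3 := pow_le_pow_left₀ (by norm_num) h2 3

lemma key' (a : ℂ) (ha : ‖a‖ < 1) : ∀ z : ℂ, ‖z‖ ≤ 1 → 1 - (starRingEnd ℂ) a * z ≠ 0 := by
  intro z hz h
  have h1 : ‖(starRingEnd ℂ) a * z‖ < 1 := by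
    rw [norm_mul, RCLike.norm_conj]
    nlinarith [norm_nonneg a, norm_nonneg z]
  have hvz : (starRingEnd ℂ) a * z = 1 := by linear_combination -h
  rw [hvz] at h1; simp at h1

lemma memHp_fa (a : ℂ) (ha : ‖a‖ < 1) :
    MemHp (ENNReal.ofReal 3) (fun z => (1 - (starRingEnd ℂ) a * z)⁻¹) := by
  refine ⟨?_, ?_, ?_⟩
  · intro z hz
    rw [unitDisk, mem_ball_zero_iff] at hz
    exact (((differentiableAt_const (1:ℂ)).sub
      ((differentiableAt_const _).mul differentiableAt_id)).inv
      (key' a ha z hz.le)).differentiableWithinAt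
  · exact lt_of_le_of_lt (hNorm_le a ha)
      (ENNReal.rpow_lt_top_of_nonneg (by norm_num) ENNReal.ofReal_ne_top)
  · filter_upwards [circle_ae_norm_one] with ζ hζ
    have hne1 : 1 - (starRingEnd ℂ) a * (((1:ℝ):ℂ) * ζ) ≠ 0 := by
      apply key' a ha
      rw [norm_mul, Complex.norm_real, hζ, mul_one, Real.norm_eq_abs]
      norm_num
    have hcont : ContinuousAt (fun r : ℝ => (1 - (starRingEnd ℂ) a * ((r:ℂ) * ζ))⁻¹) 1 :=
      ContinuousAt.inv₀ ((continuous_const.sub (continuous_const.mul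
        (Complex.continuous_ofReal.mul continuous_const))).continuousAt) hne1
    have heq : (((1:ℝ):ℂ)) * ζ = ζ := by norm_num
    have := hcont.tendsto.mono_left (nhdsWithin_le_nhds (s := Iio (1:ℝ)))
    rw [heq] at this
    exact this

lemma area_lb (a : ℂ) (h2 : 1/2 ≤ ‖a‖) (ha : ‖a‖ < 1) :
    ENNReal.ofReal ((10000:ℝ)⁻¹ * ((1-‖a‖)⁻¹ * ((1-‖a‖)⁻¹ * (1-‖a‖)⁻¹)))
      ≤ ∫⁻ z in unitDisk,
          (‖deriv (fun w => (1 - (starRingEnd ℂ) a * w)⁻¹) z‖₊ : ℝ≥0∞) ^ 3 *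
            ENNReal.ofReal (1 - ‖z‖) ∂volume := by
  set δ : ℝ := 1 - ‖a‖ with hδdef
  have hδ : 0 < δ := by rw [hδdef]; linarith
  set B : Set ℂ := ball a (δ/4) with hB
  have hz_norm : ∀ z ∈ B, ‖z‖ ≤ 1 - 3/4*δ := by
    intro z hz
    rw [hB, mem_ball, dist_eq_norm] at hz
    calc ‖z‖ = ‖a + (z - a)‖ := by ring_nf
      _ ≤ ‖a‖ + ‖z - a‖ := norm_add_le _ _
      _ ≤ 1 - 3/4*δ := by linarith
  have hBsub : B ⊆ unitDisk := by
    intro z hz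
    rw [unitDisk, mem_ball_zero_iff]
    have := hz_norm z hz
    linarith
  -- pointwise bound on B
  have hptwise : ∀ z ∈ B,
      ENNReal.ofReal ((8/81*(δ⁻¹*δ⁻¹))^3 * (3/4*δ))
        ≤ (‖deriv (fun w => (1 - (starRingEnd ℂ) a * w)⁻¹) z‖₊ : ℝ≥0∞) ^ 3 *
            ENNReal.ofReal (1 - ‖z‖) := by
    intro z hz
    have hz1 : ‖z‖ ≤ 1 := by have := hz_norm z hz; linarith
    have hne : 1 - (starRingEnd ℂ) a * z ≠ 0 := key' a ha z hz1
    set u : ℂ := 1 - (starRingEnd ℂ) a * z with hu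
    have hub : ‖u‖ ≤ 9/4*δ := by
      have hsplit : u = (1 - (starRingEnd ℂ) a * a) + (starRingEnd ℂ) a * (a - z) := by
        rw [hu]; ring
      have h1 : ‖(1:ℂ) - (starRingEnd ℂ) a * a‖ ≤ 2*δ := by
        have hcm : (starRingEnd ℂ) a * a = (Complex.normSq a : ℂ) := by
          rw [mul_comm, Complex.mul_conj]
        rw [hcm, show (1:ℂ) - (Complex.normSq a : ℂ) = ((1 - Complex.normSq a : ℝ) : ℂ) by
          push_cast; ring, Complex.norm_real, Real.norm_eq_abs]
        have hnsq : Complex.normSq a = ‖a‖^2 := by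
          rw [Complex.normSq_eq_norm_sq]
        rw [hnsq, _root_.abs_of_nonneg (by nlinarith)]
        nlinarith
      have h2' : ‖(starRingEnd ℂ) a * (a - z)‖ ≤ δ/4 := by
        rw [norm_mul, RCLike.norm_conj]
        have hdz : ‖a - z‖ < δ/4 := by
          rw [hB, mem_ball, dist_eq_norm] at hz
          rw [show a - z = -(z - a) by ring, norm_neg]
          exact hz
        nlinarith [norm_nonneg a, norm_nonneg (a - z)]
      calc ‖u‖ ≤ ‖(1:ℂ) - (starRingEnd ℂ) a * a‖ + ‖(starRingEnd ℂ) a * (a - z)‖ := by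
            rw [hsplit]; exact norm_add_le _ _
        _ ≤ 9/4*δ := by linarith
    have hderiv : deriv (fun w => (1 - (starRingEnd ℂ) a * w)⁻¹) z
        = (starRingEnd ℂ) a / u^2 := by
      have H0 : HasDerivAt (fun w : ℂ => 1 - (starRingEnd ℂ) a * w)
          (-((starRingEnd ℂ) a * 1)) z := ((hasDerivAt_id z).const_mul _).const_sub 1
      have H := H0.inv hne
      rw [hu]
      convert H.deriv using 1
      · rfl
      · ring
    have hnd : 8/81*(δ⁻¹*δ⁻¹) ≤ ‖deriv (fun w => (1 - (starRingEnd ℂ) a * w)⁻¹) z‖ := by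
      rw [hderiv, norm_div, RCLike.norm_conj, norm_pow]
      have hu0 : 0 < ‖u‖ := norm_pos_iff.mpr hne
      have husq : ‖u‖^2 ≤ 81/16*δ^2 := by nlinarith
      have heq : 8/81*(δ⁻¹*δ⁻¹) = (1/2) / (81/16*δ^2) := by
        field_simp; ring
      rw [heq]
      apply div_le_div₀ (norm_nonneg a) h2 (by positivity) husq
    have hcube : ENNReal.ofReal ((8/81*(δ⁻¹*δ⁻¹))^3)
        ≤ (‖deriv (fun w => (1 - (starRingEnd ℂ) a * w)⁻¹) z‖₊ : ℝ≥0∞) ^ 3 := by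
      rw [← ENNReal.ofReal_coe_nnreal, coe_nnnorm, ← ENNReal.ofReal_pow (norm_nonneg _)]
      apply ENNReal.ofReal_le_ofReal
      apply pow_le_pow_left₀ (by positivity) hnd
    calc ENNReal.ofReal ((8/81*(δ⁻¹*δ⁻¹))^3 * (3/4*δ))
        = ENNReal.ofReal ((8/81*(δ⁻¹*δ⁻¹))^3) * ENNReal.ofReal (3/4*δ) := by
          rw [← ENNReal.ofReal_mul (by positivity)]
      _ ≤ (‖deriv (fun w => (1 - (starRingEnd ℂ) a * w)⁻¹) z‖₊ : ℝ≥0∞) ^ 3 *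
            ENNReal.ofReal (1 - ‖z‖) := by
          apply mul_le_mul' hcube
          apply ENNReal.ofReal_le_ofReal
          have := hz_norm z hz
          linarith
  calc ENNReal.ofReal ((10000:ℝ)⁻¹ * ((1-‖a‖)⁻¹ * ((1-‖a‖)⁻¹ * (1-‖a‖)⁻¹)))
      ≤ ENNReal.ofReal ((8/81*(δ⁻¹*δ⁻¹))^3 * (3/4*δ)) * volume B := by
        rw [hB, Complex.volume_ball]
        have hpi : (NNReal.pi : ℝ≥0∞) = ENNReal.ofReal Real.pi := by
          rw [← NNReal.coe_real_pi, ENNReal.ofReal_coe_nnreal]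
        rw [hpi, ← ENNReal.ofReal_pow (by positivity), ← ENNReal.ofReal_mul (by positivity),
          ← ENNReal.ofReal_mul (by positivity)]
        apply ENNReal.ofReal_le_ofReal
        have hπ : (3:ℝ) ≤ Real.pi := by linarith [Real.pi_gt_three]
        have hrw : (8/81*(δ⁻¹*δ⁻¹))^3 * (3/4*δ) * ((δ/4)^2 * Real.pi)
            = ((8/81)^3*(3/64)*Real.pi) * (δ⁻¹*(δ⁻¹*δ⁻¹)) := by
          field_simp
          ring
        rw [hrw]
        have hC : (10000:ℝ)⁻¹ ≤ (8/81)^3*(3/64)*Real.pi := by nlinarith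
        have hpos : (0:ℝ) ≤ δ⁻¹*(δ⁻¹*δ⁻¹) := by positivity
        calc (10000:ℝ)⁻¹ * ((1-‖a‖)⁻¹ * ((1-‖a‖)⁻¹ * (1-‖a‖)⁻¹))
            = (10000:ℝ)⁻¹ * (δ⁻¹*(δ⁻¹*δ⁻¹)) := by rw [hδdef]
          _ ≤ ((8/81)^3*(3/64)*Real.pi) * (δ⁻¹*(δ⁻¹*δ⁻¹)) :=
              mul_le_mul_of_nonneg_right hC hpos
    _ = ∫⁻ _ in B, ENNReal.ofReal ((8/81*(δ⁻¹*δ⁻¹))^3 * (3/4*δ)) ∂volume := by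
        rw [setLIntegral_const, mul_comm]
    _ ≤ ∫⁻ z in B,
          (‖deriv (fun w => (1 - (starRingEnd ℂ) a * w)⁻¹) z‖₊ : ℝ≥0∞) ^ 3 *
            ENNReal.ofReal (1 - ‖z‖) ∂volume := by
        apply setLIntegral_mono' measurableSet_ball hptwise
    _ ≤ ∫⁻ z in unitDisk,
          (‖deriv (fun w => (1 - (starRingEnd ℂ) a * w)⁻¹) z‖₊ : ℝ≥0∞) ^ 3 *
            ENNReal.ofReal (1 - ‖z‖) ∂volume := by
        exact lintegral_mono' (Measure.restrict_mono hBsub le_rfl) le_rfl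

lemma part1 : ∀ a : ℂ, 1 / 2 ≤ ‖a‖ → ‖a‖ < 1 →
      ENNReal.ofReal ((10000:ℝ)⁻¹) * (ENNReal.ofReal (1 - ‖a‖))⁻¹ *
          hNorm (ENNReal.ofReal 3) (fun z => (1 - (starRingEnd ℂ) a * z)⁻¹) ^ 3 ≤
        ∫⁻ z in unitDisk,
          (‖deriv (fun w => (1 - (starRingEnd ℂ) a * w)⁻¹) z‖₊ : ℝ≥0∞) ^ 3 *
            ENNReal.ofReal (1 - ‖z‖) ∂volume := by
  intro a h2 ha
  have hδ : 0 < 1 - ‖a‖ := by linarith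
  refine le_trans ?_ (area_lb a h2 ha)
  calc ENNReal.ofReal ((10000:ℝ)⁻¹) * (ENNReal.ofReal (1 - ‖a‖))⁻¹ *
          hNorm (ENNReal.ofReal 3) (fun z => (1 - (starRingEnd ℂ) a * z)⁻¹) ^ 3
      ≤ ENNReal.ofReal ((10000:ℝ)⁻¹) * ENNReal.ofReal ((1 - ‖a‖)⁻¹) *
          ENNReal.ofReal ((1-‖a‖)⁻¹ * (1-‖a‖)⁻¹) := by
        rw [ENNReal.ofReal_inv_of_pos hδ]
        exact mul_le_mul_right (hNorm_cube_le a ha) _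
    _ = ENNReal.ofReal ((10000:ℝ)⁻¹ * ((1-‖a‖)⁻¹ * ((1-‖a‖)⁻¹ * (1-‖a‖)⁻¹))) := by
        rw [← ENNReal.ofReal_mul (by positivity), ← ENNReal.ofReal_mul (by positivity)]
        congr 1
        ring


/-- The Littlewood--Paley quantity `∫_D |f'|³ (1−|z|) dA` blows up for the test functions
`f_a(z) = (1 − conj a·z)⁻¹` at rate `(1−|a|)⁻¹ ‖f_a‖₃³`; consequently no bound
`∫_D |f'|³ (1−|z|) dA ≤ C ‖f‖₃³` can hold on all of `H³`. -/
theorem littlewood_paley_cube_fails :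
    (∃ c : ℝ, 0 < c ∧ ∀ a : ℂ, 1 / 2 ≤ ‖a‖ → ‖a‖ < 1 →
      ENNReal.ofReal c * (ENNReal.ofReal (1 - ‖a‖))⁻¹ *
          hNorm (ENNReal.ofReal 3) (fun z => (1 - (starRingEnd ℂ) a * z)⁻¹) ^ 3 ≤
        ∫⁻ z in unitDisk,
          (‖deriv (fun w => (1 - (starRingEnd ℂ) a * w)⁻¹) z‖₊ : ℝ≥0∞) ^ 3 *
            ENNReal.ofReal (1 - ‖z‖) ∂volume) ∧
    ¬ ∃ C : ℝ, 0 < C ∧ ∀ f : ℂ → ℂ, MemHp (ENNReal.ofReal 3) f →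
      ∫⁻ z in unitDisk,
          (‖deriv f z‖₊ : ℝ≥0∞) ^ 3 * ENNReal.ofReal (1 - ‖z‖) ∂volume ≤
        ENNReal.ofReal C * hNorm (ENNReal.ofReal 3) f ^ 3 := by
  constructor
  · exact ⟨(10000:ℝ)⁻¹, by norm_num, part1⟩
  · rintro ⟨C, hC, hbd⟩
    set ε : ℝ := min (1/2) ((10000:ℝ)⁻¹ / (2*C)) with hε
    have hε0 : 0 < ε := by
      apply lt_min (by norm_num)
      positivity
    have hεhalf : ε ≤ 1/2 := min_le_left _ _
    have hεC : ε ≤ (10000:ℝ)⁻¹ / (2*C) := min_le_right _ _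
    set a : ℂ := ((1 - ε : ℝ) : ℂ) with haa
    have hna : ‖a‖ = 1 - ε := by
      rw [haa, Complex.norm_real, Real.norm_eq_abs, _root_.abs_of_nonneg (by linarith)]
    have h2 : 1/2 ≤ ‖a‖ := by rw [hna]; linarith
    have ha : ‖a‖ < 1 := by rw [hna]; linarith
    have hδε : 1 - ‖a‖ = ε := by rw [hna]; ring
    set X : ℝ≥0∞ := hNorm (ENNReal.ofReal 3) (fun z => (1 - (starRingEnd ℂ) a * z)⁻¹) ^ 3
      with hX
    have hX0 : X ≠ 0 := by
      rw [hX]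
      apply pow_ne_zero
      have hlb := hNorm_lb a ha
      have hpos : (0:ℝ≥0∞) < ENNReal.ofReal (8⁻¹) ^ (1/(3:ℝ)) :=
        ENNReal.rpow_pos (ENNReal.ofReal_pos.mpr (by norm_num)) ENNReal.ofReal_ne_top
      exact ne_of_gt (lt_of_lt_of_le hpos hlb)
    have hXt : X ≠ ⊤ := by
      rw [hX]
      exact (lt_of_le_of_lt (hNorm_cube_le a ha) ENNReal.ofReal_lt_top).ne
    have hup := hbd _ (memHp_fa a ha)
    have hlo := part1 a h2 ha
    have hchain : ENNReal.ofReal ((10000:ℝ)⁻¹) * (ENNReal.ofReal (1-‖a‖))⁻¹ * X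
        ≤ ENNReal.ofReal C * X := le_trans hlo hup
    rw [hδε, ← ENNReal.ofReal_inv_of_pos hε0] at hchain
    have hcc := (ENNReal.mul_le_mul_iff_left hX0 hXt).mp hchain
    rw [← ENNReal.ofReal_mul (by norm_num)] at hcc
    have hfin : (10000:ℝ)⁻¹ * ε⁻¹ ≤ C := (ENNReal.ofReal_le_ofReal_iff hC.le).mp hcc
    have hdpos : (0:ℝ) < (10000:ℝ)⁻¹ / (2*C) := by positivity
    have hinv : ((10000:ℝ)⁻¹ / (2*C))⁻¹ ≤ ε⁻¹ := inv_anti₀ hε0 hεC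
    have h2C : 2*C ≤ (10000:ℝ)⁻¹ * ε⁻¹ := by
      calc 2*C = (10000:ℝ)⁻¹ * ((10000:ℝ)⁻¹ / (2*C))⁻¹ := by field_simp
        _ ≤ (10000:ℝ)⁻¹ * ε⁻¹ := mul_le_mul_of_nonneg_left hinv (by norm_num)
    linarith
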